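/- For |q| < 1, the function F_q(z) = ∏_{k=1}^∞ (1 - q^k z) defines an entire function of z, and F_q(z) = 1 + ∑_{k=1}^∞ q^{k(k+1)/2} / ((q-1)(q²-1)⋯(q^k-1)) · z^k for all z ∈ ℂ. -/

import Mathlib

open Filter Topology Finset

noncomputable def euA (q : ℂ) : ℕ → ℂ
  | 0 => q / (q - 1)
  | (k+1) => euA q k * q ^ (k+2) / (q ^ (k+2) - 1)

lemma euA_denom_ne (q : ℂ) (hq : ‖q‖ < 1) (i : ℕ) : q ^ (i+1) - 1 ≠ 0 := by
  intro h
  have : q ^ (i+1) = 1 := by linear_combination h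
  have := congrArg norm this
  rw [norm_pow, norm_one] at this
  have : ‖q‖ ^ (i+1) < 1 := pow_lt_one₀ (norm_nonneg q) hq (Nat.succ_ne_zero i)
  simp_all

lemma euA_closed (q : ℂ) (hq : ‖q‖ < 1) (k : ℕ) :
    euA q k = q ^ ((k+1)*(k+2)/2) / ∏ i ∈ Finset.range (k+1), (q ^ (i+1) - 1) := by
  induction k with
  | zero => simp [euA]
  | succ k ih =>
    have hd : ∀ j, q ^ (j+1) - 1 ≠ 0 := euA_denom_ne q hq
    have hprod : (∏ i ∈ Finset.range (k+1), (q ^ (i+1) - 1)) ≠ 0 :=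
      Finset.prod_ne_zero_iff.2 fun i _ => hd i
    have hexp : (k+2)*(k+3)/2 = (k+1)*(k+2)/2 + (k+2) := by
      have h1 : 2 ∣ (k+1)*(k+2) := Nat.even_mul_succ_self (k+1) |>.two_dvd
      obtain ⟨m, hm⟩ := h1
      have h2 : (k+2)*(k+3) = (k+1)*(k+2) + 2*(k+2) := by ring
      omega
    show euA q k * q ^ (k+2) / (q ^ (k+2) - 1) = _
    rw [ih, show k + 1 + 1 = k + 2 from rfl, show k + 1 + 2 = k + 3 from rfl,
      hexp, pow_add, div_mul_eq_mul_div, div_div]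
    conv_rhs => rw [show k + 2 = k + 1 + 1 from rfl, Finset.prod_range_succ]
    rw [← pow_add, ← pow_add]

lemma euA_norm_step (q : ℂ) (hq : ‖q‖ < 1) (z : ℂ) (k : ℕ) :
    ‖euA q (k+1) * z ^ (k+2)‖ ≤
      (‖q‖ ^ (k+2) * ‖z‖ / (1 - ‖q‖)) * ‖euA q k * z ^ (k+1)‖ := by
  have hden : (1 : ℝ) - ‖q‖ ≤ ‖q ^ (k+2) - 1‖ := by
    calc (1:ℝ) - ‖q‖ ≤ 1 - ‖q‖ ^ (k+2) := by
          have : ‖q‖ ^ (k+2) ≤ ‖q‖ := by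
            calc ‖q‖ ^ (k+2) ≤ ‖q‖ ^ 1 :=
              pow_le_pow_of_le_one (norm_nonneg q) hq.le (by omega)
            _ = ‖q‖ := pow_one _
          linarith
      _ ≤ ‖q ^ (k+2) - 1‖ := by
          rw [norm_sub_rev]
          calc 1 - ‖q‖^(k+2) = ‖(1:ℂ)‖ - ‖q^(k+2)‖ := by rw [norm_one, norm_pow]
            _ ≤ ‖(1:ℂ) - q^(k+2)‖ := norm_sub_norm_le _ _
  have hpos : (0:ℝ) < 1 - ‖q‖ := by linarith
  have heq : euA q (k+1) * z ^ (k+2) =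
      (euA q k * z ^ (k+1)) * (q ^ (k+2) * z / (q ^ (k+2) - 1)) := by
    show euA q k * q ^ (k+2) / (q ^ (k+2) - 1) * z ^ (k+2) = _
    rw [show k + 2 = (k+1) + 1 from rfl, pow_succ z]
    field_simp
  rw [heq, norm_mul, mul_comm]
  have h2 : ‖q ^ (k+2) * z / (q ^ (k+2) - 1)‖ ≤ ‖q‖ ^ (k+2) * ‖z‖ / (1 - ‖q‖) := by
    rw [norm_div, norm_mul, norm_pow]
    gcongr
  exact mul_le_mul_of_nonneg_right h2 (norm_nonneg _)

lemma euA_ratio_ev (q : ℂ) (hq : ‖q‖ < 1) (z : ℂ) :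
    ∀ᶠ k in Filter.atTop,
      ‖euA q (k+1) * z ^ (k+2)‖ ≤ (1/2) * ‖euA q k * z ^ (k+1)‖ := by
  have h0 : Filter.Tendsto (fun k : ℕ => ‖q‖ ^ (k+2) * ‖z‖ / (1 - ‖q‖))
      Filter.atTop (𝓝 (0 * ‖z‖ / (1 - ‖q‖))) := by
    apply Filter.Tendsto.div_const
    apply Filter.Tendsto.mul_const
    exact (tendsto_pow_atTop_nhds_zero_of_norm_lt_one
      (by simpa using hq)).comp (Filter.tendsto_add_atTop_nat 2)
  rw [zero_mul, zero_div] at h0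
  filter_upwards [h0.eventually_le_const (by norm_num : (0:ℝ) < 1/2)] with k hk
  calc ‖euA q (k+1) * z ^ (k+2)‖
      ≤ (‖q‖ ^ (k+2) * ‖z‖ / (1 - ‖q‖)) * ‖euA q k * z ^ (k+1)‖ :=
        euA_norm_step q hq z k
    _ ≤ (1/2) * ‖euA q k * z ^ (k+1)‖ := by
        apply mul_le_mul_of_nonneg_right hk (norm_nonneg _)

lemma euSummable (q : ℂ) (hq : ‖q‖ < 1) (z : ℂ) :
    Summable (fun k => euA q k * z ^ (k+1)) :=
  summable_of_ratio_norm_eventually_le (by norm_num) (euA_ratio_ev q hq z)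

lemma euSummableNorm (q : ℂ) (hq : ‖q‖ < 1) (z : ℂ) :
    Summable (fun k => ‖euA q k * z ^ (k+1)‖) := by
  apply summable_of_ratio_norm_eventually_le (r := 1/2) (by norm_num)
  filter_upwards [euA_ratio_ev q hq z] with k hk
  simpa [norm_norm] using hk

noncomputable def euG (q : ℂ) (z : ℂ) : ℂ := 1 + ∑' k : ℕ, euA q k * z ^ (k+1)

lemma euG_zero (q : ℂ) : euG q 0 = 1 := by simp [euG]

lemma euG_differentiable (q : ℂ) (hq : ‖q‖ < 1) : Differentiable ℂ (euG q) := by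
  intro z0
  set R : ℝ := ‖z0‖ + 1 with hRdef
  have hR : 0 < R := by positivity
  have hsum : Summable (fun k => ‖euA q k * (R:ℂ) ^ (k+1)‖) := euSummableNorm q hq R
  have hb : ∀ k : ℕ, ∀ z ∈ Metric.ball (0:ℂ) R,
      ‖euA q k * z ^ (k+1)‖ ≤ ‖euA q k * (R:ℂ) ^ (k+1)‖ := by
    intro k z hz
    rw [norm_mul, norm_mul, norm_pow, norm_pow, Complex.norm_real,
      Real.norm_of_nonneg hR.le]
    have hzR : ‖z‖ ≤ R := by
      have := mem_ball_iff_norm.mp hz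
      simpa using this.le
    gcongr
  have hTU := tendstoUniformlyOn_tsum hsum hb
  have hdiff : DifferentiableOn ℂ (fun z => ∑' k : ℕ, euA q k * z ^ (k+1))
      (Metric.ball (0:ℂ) R) := by
    apply hTU.tendstoLocallyUniformlyOn.differentiableOn ?_ Metric.isOpen_ball
    filter_upwards with N
    apply Differentiable.differentiableOn
    apply Differentiable.fun_sum
    intro i _
    exact (differentiable_pow (i+1)).const_mul _
  have hmem : z0 ∈ Metric.ball (0:ℂ) R := by
    simp only [Metric.mem_ball, dist_zero_right, hRdef]
    linarith
  have : DifferentiableAt ℂ (fun z => ∑' k : ℕ, euA q k * z ^ (k+1)) z0 :=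
    hdiff.differentiableAt (Metric.isOpen_ball.mem_nhds hmem)
  exact (this.const_add 1 : DifferentiableAt ℂ (euG q) z0)

lemma euG_funEq (q : ℂ) (hq : ‖q‖ < 1) (z : ℂ) :
    euG q z = (1 - q * z) * euG q (q * z) := by
  set w := q * z with hw
  have hs1 : HasSum (fun k => euA q k * w ^ (k+1)) (euG q w - 1) := by
    have := (euSummable q hq w).hasSum
    simpa [euG, add_sub_cancel_left] using this
  set c : ℕ → ℂ := fun k => Nat.rec w (fun k _ => euA q k * w ^ (k+2)) k with hc
  have hs2 : HasSum (fun k => c (k+1)) (w * (euG q w - 1)) := by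
    have := hs1.mul_left w
    apply this.congr_fun
    intro k
    show euA q k * w ^ (k+2) = w * (euA q k * w ^ (k+1))
    ring
  have hsc : HasSum c (w * (euG q w - 1) + w) := by
    have h := (hasSum_nat_add_iff (f := c) 1).mp hs2
    simpa [hc] using h
  have hs3 : HasSum (fun k => euA q k * w ^ (k+1) - c k)
      ((euG q w - 1) - (w * (euG q w - 1) + w)) := hs1.sub hsc
  have hterm : ∀ k, euA q k * w ^ (k+1) - c k = euA q k * z ^ (k+1) := by
    intro k
    cases k with
    | zero =>
      show euA q 0 * w ^ 1 - w = euA q 0 * z ^ 1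
      have h1 : q - 1 ≠ 0 := by simpa using euA_denom_ne q hq 0
      show q / (q - 1) * w ^ 1 - w = q / (q - 1) * z ^ 1
      rw [hw]
      field_simp
      ring
    | succ k =>
      show euA q (k+1) * w ^ (k+2) - euA q k * w ^ (k+2) = euA q (k+1) * z ^ (k+2)
      have hd : q ^ (k+2) - 1 ≠ 0 := by simpa using euA_denom_ne q hq (k+1)
      show euA q k * q ^ (k+2) / (q ^ (k+2) - 1) * w ^ (k+2) - euA q k * w ^ (k+2)
        = euA q k * q ^ (k+2) / (q ^ (k+2) - 1) * z ^ (k+2)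
      rw [hw, mul_pow]
      field_simp
      ring
  have hs4 : HasSum (fun k => euA q k * z ^ (k+1))
      ((euG q w - 1) - (w * (euG q w - 1) + w)) := hs3.congr_fun (fun k => (hterm k).symm)
  have hs5 : HasSum (fun k => euA q k * z ^ (k+1)) (euG q z - 1) := by
    have := (euSummable q hq z).hasSum
    simpa [euG, add_sub_cancel_left] using this
  have := hs5.unique hs4
  rw [hw] at this ⊢
  linear_combination this

lemma euG_iter (q : ℂ) (hq : ‖q‖ < 1) (z : ℂ) (n : ℕ) :
    euG q z = (∏ i ∈ Finset.range n, (1 - q ^ (i+1) * z)) * euG q (q ^ n * z) := by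
  induction n with
  | zero => simp
  | succ n ih =>
    rw [ih, euG_funEq q hq (q ^ n * z), Finset.prod_range_succ]
    rw [show q * (q ^ n * z) = q ^ (n+1) * z by ring]
    ring

lemma euHasProd (q : ℂ) (hq : ‖q‖ < 1) (z : ℂ) :
    HasProd (fun k : ℕ => 1 - q ^ (k+1) * z) (∏' k : ℕ, (1 - q ^ (k+1) * z)) := by
  by_cases hz : ∀ k : ℕ, 1 - q ^ (k+1) * z ≠ 0
  · have hlog : Summable (fun k : ℕ => Complex.log (1 - q ^ (k+1) * z)) := by
      have hgeo : Summable (fun k : ℕ => (3/2 : ℝ) * (‖z‖ * ‖q‖ ^ (k+1))) := by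
        apply Summable.mul_left
        apply Summable.mul_left
        exact (summable_geometric_of_lt_one (norm_nonneg q) hq).comp_injective
          (add_left_injective 1)
      have hev : ∀ᶠ k : ℕ in Filter.atTop,
          ‖Complex.log (1 - q ^ (k+1) * z)‖ ≤ (3/2 : ℝ) * (‖z‖ * ‖q‖ ^ (k+1)) := by
        have h0 : Filter.Tendsto (fun k : ℕ => ‖q‖ ^ (k+1) * ‖z‖)
            Filter.atTop (𝓝 (0 * ‖z‖)) := by
          apply Filter.Tendsto.mul_const
          exact (tendsto_pow_atTop_nhds_zero_of_norm_lt_one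
            (by simpa using hq)).comp (Filter.tendsto_add_atTop_nat 1)
        rw [zero_mul] at h0
        filter_upwards [h0.eventually_le_const (by norm_num : (0:ℝ) < 1/2)] with k hk
        have hsmall : ‖-(q ^ (k+1) * z)‖ ≤ 1/2 := by
          rw [norm_neg, norm_mul, norm_pow]
          exact hk
        have := Complex.norm_log_one_add_half_le_self hsmall
        rw [show (1 : ℂ) + -(q ^ (k+1) * z) = 1 - q ^ (k+1) * z by ring] at this
        rw [norm_neg, norm_mul, norm_pow] at this
        calc ‖Complex.log (1 - q ^ (k+1) * z)‖ ≤ 3/2 * (‖q‖ ^ (k+1) * ‖z‖) := this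
          _ = 3/2 * (‖z‖ * ‖q‖ ^ (k+1)) := by ring
      apply Summable.of_norm_bounded_eventually hgeo
      rwa [Nat.cofinite_eq_atTop]
    exact (Complex.hasProd_of_hasSum_log hz hlog.hasSum).multipliable.hasProd
  · push_neg at hz
    obtain ⟨k0, hk0⟩ := hz
    have h0 : HasProd (fun k : ℕ => 1 - q ^ (k+1) * z) 0 := by
      rw [HasProd]
      have hev : ∀ᶠ s : Finset ℕ in Filter.atTop,
          (∏ i ∈ s, (1 - q ^ (i+1) * z)) = 0 := by
        filter_upwards [Filter.eventually_ge_atTop ({k0} : Finset ℕ)] with s hs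
        exact Finset.prod_eq_zero (hs (Finset.mem_singleton_self k0)) hk0
      exact Filter.Tendsto.congr' (hev.mono fun s h => h.symm) tendsto_const_nhds
    rw [h0.tprod_eq]
    exact h0

lemma euKey (q : ℂ) (hq : ‖q‖ < 1) (z : ℂ) :
    (∏' k : ℕ, (1 - q ^ (k+1) * z)) = euG q z := by
  have hp := (euHasProd q hq z).tendsto_prod_nat
  have hg : Filter.Tendsto (fun n : ℕ => euG q (q ^ n * z)) Filter.atTop (𝓝 1) := by
    have hq0 : Filter.Tendsto (fun n : ℕ => q ^ n * z) Filter.atTop (𝓝 0) := by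
      have := (tendsto_pow_atTop_nhds_zero_of_norm_lt_one hq).mul_const z
      simpa using this
    have hc := ((euG_differentiable q hq).continuous.continuousAt (x := (0:ℂ))).tendsto
    rw [euG_zero] at hc
    exact hc.comp hq0
  have hmul : Filter.Tendsto
      (fun n : ℕ => (∏ i ∈ Finset.range n, (1 - q ^ (i+1) * z)) * euG q (q ^ n * z))
      Filter.atTop (𝓝 ((∏' k : ℕ, (1 - q ^ (k+1) * z)) * 1)) := hp.mul hg
  rw [mul_one] at hmul
  have hconst : (fun n : ℕ =>
      (∏ i ∈ Finset.range n, (1 - q ^ (i+1) * z)) * euG q (q ^ n * z))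
      = fun _ => euG q z := funext fun n => (euG_iter q hq z n).symm
  rw [hconst] at hmul
  exact (tendsto_nhds_unique tendsto_const_nhds hmul).symm

/-- For `|q| < 1`, `F_q(z) = ∏_{k≥1} (1 - qᵏ z)` is entire and
`F_q(z) = 1 + ∑_{k≥1} q^{k(k+1)/2}/((q-1)⋯(qᵏ-1)) zᵏ`. -/
theorem stmt_5 (q : ℂ) (hq : ‖q‖ < 1) :
    Differentiable ℂ (fun z : ℂ => ∏' k : ℕ, (1 - q ^ (k + 1) * z)) ∧
    ∀ z : ℂ, (∏' k : ℕ, (1 - q ^ (k + 1) * z)) =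
      1 + ∑' k : ℕ, q ^ ((k + 1) * (k + 2) / 2) /
        (∏ i ∈ Finset.range (k + 1), (q ^ (i + 1) - 1)) * z ^ (k + 1) := by
  constructor
  · have : (fun z : ℂ => ∏' k : ℕ, (1 - q ^ (k + 1) * z)) = euG q :=
      funext fun z => euKey q hq z
    rw [this]
    exact euG_differentiable q hq
  · intro z
    rw [euKey q hq z, euG]
    congr 1
    apply tsum_congr
    intro k
    rw [euA_closed q hq k]
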